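/- arXiv:nlin/0307026 — 2 statements merged into one kernel-verified Lean document; each statement's English description precedes it below -/
import Mathlib

section
/- Let L>0, T>0, and let u : [0,L] × [0,T] → ℂ be continuous, twice continuously differentiable in x and once in t on [0,L] × (0,T) (up to the endpoints in x), satisfying the defocusing NLS equation i∂_t u = ∂_x²u − 2|u|²u on (0,L)×(0,T), with boundary values v₀(t) = u(0,t) and v_L(t) = u(L,t). Let q : ℝ × (0,T) → ℂ be the odd 2L-periodic extension of u: q(x,t) = u(x,t) for 0 < x < L, q(x,t) = −u(−x,t) for −L < x < 0, and q(x+2L,t) = q(x,t). Then for every smooth compactly supported test function φ : ℝ × (0,T) → ℂ one has ∫∫ [ q(x,t)(−i ∂_tφ(x,t) − ∂_x²φ(x,t)) + 2|q(x,t)|² q(x,t) φ(x,t) ] dx dt = 2 ∫ Σ_{n∈ℤ} [ v₀(t) ∂_xφ(2nL, t) − v_L(t) ∂_xφ((2n+1)L, t) ] dt (the sum over n is finite on the support of φ). That is, q satisfies the defocusing NLS with δ'-sources of strengths −2v₀(t) at the points 2nL and 2v_L(t) at the points (2n+1)L, in the distributional sense. -/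
set_option autoImplicit false
set_option maxHeartbeats 1000000

open MeasureTheory

private lemma sum_range_two_mul' (M : ℕ) (f : ℕ → ℂ) :
    ∑ i ∈ Finset.range (2 * M), f i = ∑ j ∈ Finset.range M, (f (2 * j) + f (2 * j + 1)) := by
  induction M with
  | zero => simp
  | succ m ih =>
    have h2 : 2 * (m + 1) = (2 * m + 1) + 1 := by ring
    rw [h2, Finset.sum_range_succ, Finset.sum_range_succ, ih, Finset.sum_range_succ]
    ring

/-- The odd `2L`-periodic extension of a solution of the Dirichlet problem for the
defocusing NLS on `[0,L]` satisfies, in the distributional sense, the defocusing NLS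
with `δ'`-sources of strengths `−2v₀(t)` at the points `2nL` and `2v_L(t)` at the points
`(2n+1)L`. -/
theorem odd_extension_distributional_NLS
    (L T : ℝ) (hL : 0 < L) (hT : 0 < T)
    (u ux uxx ut : ℝ → ℝ → ℂ)
    (hu_cont : ContinuousOn (fun p : ℝ × ℝ => u p.1 p.2) (Set.Icc 0 L ×ˢ Set.Icc 0 T))
    (hux : ∀ t ∈ Set.Ioo (0:ℝ) T, ∀ x ∈ Set.Icc (0:ℝ) L,
      HasDerivWithinAt (fun y => u y t) (ux x t) (Set.Icc 0 L) x)
    (huxx : ∀ t ∈ Set.Ioo (0:ℝ) T, ∀ x ∈ Set.Icc (0:ℝ) L,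
      HasDerivWithinAt (fun y => ux y t) (uxx x t) (Set.Icc 0 L) x)
    (huxx_cont : ∀ t ∈ Set.Ioo (0:ℝ) T, ContinuousOn (fun x => uxx x t) (Set.Icc 0 L))
    (hut : ∀ x ∈ Set.Icc (0:ℝ) L, ∀ t ∈ Set.Ioo (0:ℝ) T,
      HasDerivAt (fun s => u x s) (ut x t) t)
    (hut_cont : ContinuousOn (fun p : ℝ × ℝ => ut p.1 p.2) (Set.Icc 0 L ×ˢ Set.Ioo 0 T))
    (hNLS : ∀ x ∈ Set.Ioo (0:ℝ) L, ∀ t ∈ Set.Ioo (0:ℝ) T,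
      Complex.I * ut x t = uxx x t - 2 * (‖u x t‖ : ℂ) ^ 2 * u x t)
    (q : ℝ → ℝ → ℂ)
    (hq1 : ∀ t ∈ Set.Ioo (0:ℝ) T, ∀ x ∈ Set.Ioo (0:ℝ) L, q x t = u x t)
    (hq2 : ∀ t ∈ Set.Ioo (0:ℝ) T, ∀ x ∈ Set.Ioo (-L) (0:ℝ), q x t = -u (-x) t)
    (hqper : ∀ t ∈ Set.Ioo (0:ℝ) T, ∀ x : ℝ, q (x + 2 * L) t = q x t)
    (φ : ℝ × ℝ → ℂ) (hφ : ContDiff ℝ (⊤ : ℕ∞) φ) (hφc : HasCompactSupport φ)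
    (hφsupp : tsupport φ ⊆ Set.univ ×ˢ Set.Ioo 0 T) :
    ∫ t in Set.Ioo (0:ℝ) T, ∫ x : ℝ,
        (q x t * (-Complex.I * deriv (fun s => φ (x, s)) t -
            deriv (fun y => deriv (fun z => φ (z, t)) y) x) +
          2 * (‖q x t‖ : ℂ) ^ 2 * q x t * φ (x, t)) =
      2 * ∫ t in Set.Ioo (0:ℝ) T,
        ∑' n : ℤ, (u 0 t * deriv (fun y => φ (y, t)) (2 * n * L) -
          u L t * deriv (fun y => φ (y, t)) ((2 * n + 1) * L)) := by
  classical
  have hφd : Differentiable ℝ φ := hφ.differentiable (by simp)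
  set P1 : ℝ × ℝ → ℂ := fun p => fderiv ℝ φ p (1, 0) with hP1def
  set P2 : ℝ × ℝ → ℂ := fun p => fderiv ℝ φ p (0, 1) with hP2def
  have hD : ∀ f : ℝ × ℝ → ℂ, ContDiff ℝ (⊤ : ℕ∞) f → ∀ v : ℝ × ℝ,
      ContDiff ℝ (⊤ : ℕ∞) (fun p => fderiv ℝ f p v) := fun f hf v =>
    (hf.fderiv_right (by exact_mod_cast le_top)).clm_apply contDiff_const
  have hP1smooth : ContDiff ℝ (⊤ : ℕ∞) P1 := hD φ hφ (1, 0)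
  set P11 : ℝ × ℝ → ℂ := fun p => fderiv ℝ P1 p (1, 0) with hP11def
  have hP11cont : Continuous P11 := (hD P1 hP1smooth (1, 0)).continuous
  have hP1cont : Continuous P1 := hP1smooth.continuous
  have hP2cont : Continuous P2 := (hD φ hφ (0, 1)).continuous
  have hφcont : Continuous φ := hφ.continuous
  -- derivative identities
  have hP1d : ∀ x t : ℝ, HasDerivAt (fun y => φ (y, t)) (P1 (x, t)) x := by
    intro x t
    have h1 : HasDerivAt (fun y : ℝ => (y, t)) ((1 : ℝ), (0 : ℝ)) x :=
      (hasDerivAt_id x).prodMk (hasDerivAt_const x t)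
    exact (hφd (x, t)).hasFDerivAt.comp_hasDerivAt x h1
  have hP2d : ∀ x t : ℝ, HasDerivAt (fun s => φ (x, s)) (P2 (x, t)) t := by
    intro x t
    have h1 : HasDerivAt (fun s : ℝ => (x, s)) ((0 : ℝ), (1 : ℝ)) t :=
      (hasDerivAt_const t x).prodMk (hasDerivAt_id t)
    exact (hφd (x, t)).hasFDerivAt.comp_hasDerivAt t h1
  have hP11d : ∀ x t : ℝ, HasDerivAt (fun y => P1 (y, t)) (P11 (x, t)) x := by
    intro x t
    have h1 : HasDerivAt (fun y : ℝ => (y, t)) ((1 : ℝ), (0 : ℝ)) x :=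
      (hasDerivAt_id x).prodMk (hasDerivAt_const x t)
    exact
      ((hP1smooth.differentiable (by simp)) (x, t)).hasFDerivAt.comp_hasDerivAt x h1
  have hderiv1 : ∀ x t : ℝ, deriv (fun y => φ (y, t)) x = P1 (x, t) := fun x t => (hP1d x t).deriv
  have hderiv2 : ∀ x t : ℝ, deriv (fun s => φ (x, s)) t = P2 (x, t) := fun x t => (hP2d x t).deriv
  have hderiv11 : ∀ x t : ℝ,
      deriv (fun y => deriv (fun z => φ (z, t)) y) x = P11 (x, t) := by
    intro x t
    have : (fun y => deriv (fun z => φ (z, t)) y) = fun y => P1 (y, t) :=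
      funext fun y => hderiv1 y t
    rw [this]
    exact (hP11d x t).deriv
  -- vanishing outside the support
  have hzero : ∀ p : ℝ × ℝ, p ∉ tsupport φ → φ p = 0 ∧ P1 p = 0 ∧ P2 p = 0 ∧ P11 p = 0 := by
    intro p hp
    have h0 : φ p = 0 := image_eq_zero_of_notMem_tsupport hp
    have h1 : fderiv ℝ φ p = 0 := by
      by_contra h
      exact hp (support_fderiv_subset ℝ (by simpa [Function.mem_support] using h))
    have hts1 : tsupport P1 ⊆ tsupport φ := by
      refine closure_minimal (fun z hz => ?_) isClosed_closure
      have : fderiv ℝ φ z ≠ 0 := by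
        intro hcon
        simp [Function.mem_support, hP1def, hcon] at hz
      exact support_fderiv_subset ℝ (by simpa [Function.mem_support] using this)
    have h11 : P11 p = 0 := by
      have : fderiv ℝ P1 p = 0 := by
        by_contra h
        exact hp (hts1 (tsupport_fderiv_subset ℝ (subset_closure
          (by simpa [Function.mem_support] using h))))
      simp [hP11def, this]
    exact ⟨h0, by simp [hP1def, h1], by simp [hP2def, h1], h11⟩
  -- time support bounds
  obtain ⟨t0, t1, ht0, ht01, ht1, hst⟩ :
      ∃ t0 t1 : ℝ, 0 < t0 ∧ t0 ≤ t1 ∧ t1 < T ∧ ∀ p ∈ tsupport φ, p.2 ∈ Set.Icc t0 t1 := by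
    by_cases hne : (tsupport φ).Nonempty
    · have hK2 : IsCompact (Prod.snd '' tsupport φ) := hφc.image continuous_snd
      have hsub : Prod.snd '' tsupport φ ⊆ Set.Ioo 0 T := by
        rintro _ ⟨p, hp, rfl⟩; exact (hφsupp hp).2
      have hne2 : (Prod.snd '' tsupport φ).Nonempty := hne.image _
      have h1 := hK2.sInf_mem hne2
      have h2 := hK2.sSup_mem hne2
      refine ⟨sInf (Prod.snd '' tsupport φ), sSup (Prod.snd '' tsupport φ),
        (hsub h1).1, ?_, (hsub h2).2, ?_⟩
      · exact csInf_le_csSup hne2 hK2.bddBelow hK2.bddAbove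
      · intro p hp
        exact ⟨csInf_le hK2.bddBelow ⟨p, hp, rfl⟩, le_csSup hK2.bddAbove ⟨p, hp, rfl⟩⟩
    · rw [Set.not_nonempty_iff_eq_empty] at hne
      exact ⟨T/2, T/2, by linarith, le_refl _, by linarith, by simp [hne]⟩
  -- spatial support bound
  obtain ⟨R, hR⟩ : ∃ R : ℝ, ∀ p ∈ tsupport φ, |p.1| ≤ R := by
    obtain ⟨r, hr⟩ := hφc.isBounded.subset_closedBall 0
    refine ⟨r, fun p hp => ?_⟩
    have h1 := hr hp
    rw [Metric.mem_closedBall, dist_zero_right] at h1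
    calc |p.1| = ‖p.1‖ := (Real.norm_eq_abs _).symm
    _ ≤ ‖p‖ := norm_fst_le p
    _ ≤ r := h1
  obtain ⟨N, hN⟩ := exists_nat_gt (R / L)
  have hRN : R < N * L := by
    have := (div_lt_iff₀ hL).1 hN
    linarith
  -- clamping
  set cl : ℝ → ℝ → ℝ → ℝ := fun lo hi x => max lo (min hi x) with hcl
  have hclmem : ∀ lo hi x : ℝ, lo ≤ hi → cl lo hi x ∈ Set.Icc lo hi := by
    intro lo hi x h
    exact ⟨le_max_left _ _, max_le h (min_le_left _ _)⟩
  have hclid : ∀ lo hi x : ℝ, x ∈ Set.Icc lo hi → cl lo hi x = x := by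
    intro lo hi x hx
    simp only [hcl]
    rw [min_eq_right hx.2, max_eq_right hx.1]
  have hclcont : ∀ lo hi : ℝ, Continuous (cl lo hi) :=
    fun lo hi => continuous_const.max (continuous_const.min continuous_id)
  set U : ℝ × ℝ → ℂ := fun p => u (cl 0 L p.1) (cl 0 T p.2) with hU
  have hUcont : Continuous U := by
    have h1 : Continuous (fun p : ℝ × ℝ => (cl 0 L p.1, cl 0 T p.2)) :=
      ((hclcont 0 L).comp continuous_fst).prodMk ((hclcont 0 T).comp continuous_snd)
    have := hu_cont.comp_continuous h1
      (fun p => Set.mk_mem_prod (hclmem _ _ _ hL.le) (hclmem _ _ _ hT.le))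
    simpa [Function.comp_def] using this
  have hUeq : ∀ x ∈ Set.Icc (0:ℝ) L, ∀ s ∈ Set.Icc (0:ℝ) T, U (x, s) = u x s := by
    intro x hx s hs; simp only [hU]; rw [hclid _ _ _ hx, hclid _ _ _ hs]
  set Ut : ℝ × ℝ → ℂ := fun p => ut (cl 0 L p.1) (cl t0 t1 p.2) with hUt
  have hUtcont : Continuous Ut := by
    have h1 : Continuous (fun p : ℝ × ℝ => (cl 0 L p.1, cl t0 t1 p.2)) :=
      ((hclcont 0 L).comp continuous_fst).prodMk ((hclcont t0 t1).comp continuous_snd)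
    have hmem : ∀ p : ℝ × ℝ, (cl 0 L p.1, cl t0 t1 p.2) ∈ Set.Icc 0 L ×ˢ Set.Ioo 0 T := by
      intro p
      refine Set.mk_mem_prod (hclmem _ _ _ hL.le) ?_
      have h2 := hclmem t0 t1 p.2 ht01
      exact ⟨lt_of_lt_of_le ht0 h2.1, lt_of_le_of_lt h2.2 ht1⟩
    have := hut_cont.comp_continuous h1 hmem
    simpa [Function.comp_def] using this
  have hUteq : ∀ x ∈ Set.Icc (0:ℝ) L, ∀ s ∈ Set.Icc t0 t1, Ut (x, s) = ut x s := by
    intro x hx s hs; simp only [hUt]; rw [hclid _ _ _ hx, hclid _ _ _ hs]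
  -- slice continuity
  have hucont_t : ∀ t ∈ Set.Ioo (0:ℝ) T, ContinuousOn (fun y => u y t) (Set.Icc 0 L) :=
    fun t ht x hx => (hux t ht x hx).continuousWithinAt
  have huxcont_t : ∀ t ∈ Set.Ioo (0:ℝ) T, ContinuousOn (fun y => ux y t) (Set.Icc 0 L) :=
    fun t ht x hx => (huxx t ht x hx).continuousWithinAt
  -- iterated periodicity
  have hshift : ∀ t ∈ Set.Ioo (0:ℝ) T, ∀ x : ℝ, ∀ m : ℤ, q (x + 2*L*(m:ℝ)) t = q x t := by
    intro t ht x m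
    induction m using Int.induction_on with
    | zero => simp
    | succ n ih =>
      have h1 : x + 2*L*(((n:ℤ)+1 : ℤ):ℝ) = (x + 2*L*((n:ℤ):ℝ)) + 2*L := by push_cast; ring
      rw [h1, hqper t ht, ih]
    | pred n ih =>
      have key := hqper t ht (x + 2*L*((-(n:ℤ)-1 : ℤ):ℝ))
      have h1 : x + 2*L*((-(n:ℤ)-1 : ℤ):ℝ) + 2*L = x + 2*L*((-(n:ℤ) : ℤ):ℝ) := by
        push_cast; ring
      rw [h1] at key
      rw [← key]
      exact ih
  -- the per-interval core
  have core : ∀ s a c : ℝ, ((s = 1 ∧ c = -a) ∨ (s = -1 ∧ c = a + L)) →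
      (Integrable (fun t => ∫ x in Set.Ioo a (a+L),
          (-Complex.I * ((s:ℂ) * U (c + s*x, t) * P2 (x, t) + (s:ℂ) * Ut (c + s*x, t) * φ (x, t))))
        (volume.restrict (Set.Ioo (0:ℝ) T))) ∧
      ((∫ t in Set.Ioo (0:ℝ) T, ∫ x in Set.Ioo a (a+L),
          (-Complex.I * ((s:ℂ) * U (c + s*x, t) * P2 (x, t) + (s:ℂ) * Ut (c + s*x, t) * φ (x, t)))) = 0) ∧
      (∀ t ∈ Set.Ioo (0:ℝ) T,
        (IntegrableOn (fun x =>
          ((s:ℂ) * u (c + s*x) t * (-Complex.I * P2 (x, t) - P11 (x, t)) +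
            2 * (‖(s:ℂ) * u (c + s*x) t‖ : ℂ)^2 * ((s:ℂ) * u (c + s*x) t) * φ (x, t)))
          (Set.Ioo a (a+L)) volume) ∧
        (∫ x in Set.Ioo a (a+L),
          ((s:ℂ) * u (c + s*x) t * (-Complex.I * P2 (x, t) - P11 (x, t)) +
            2 * (‖(s:ℂ) * u (c + s*x) t‖ : ℂ)^2 * ((s:ℂ) * u (c + s*x) t) * φ (x, t))) =
        (∫ x in Set.Ioo a (a+L),
          (-Complex.I * ((s:ℂ) * U (c + s*x, t) * P2 (x, t) + (s:ℂ) * Ut (c + s*x, t) * φ (x, t)))) +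
        ((s:ℂ) * u (c + s*a) t * P1 (a, t) - ux (c + s*a) t * φ (a, t) -
          (s:ℂ) * u (c + s*(a+L)) t * P1 (a+L, t) + ux (c + s*(a+L)) t * φ (a+L, t))) := by
    intro s a c hsc
    have hs1 : s = 1 ∨ s = -1 := hsc.imp And.left And.left
    have hss : (s:ℂ) * (s:ℂ) = 1 := by rcases hs1 with rfl|rfl <;> norm_num
    have hsnorm : ∀ z : ℂ, ‖(s:ℂ) * z‖ = ‖z‖ := by
      intro z; rcases hs1 with rfl|rfl <;> simp
    have hmem : ∀ x ∈ Set.Icc a (a+L), c + s*x ∈ Set.Icc (0:ℝ) L := by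
      rcases hsc with ⟨rfl, rfl⟩ | ⟨rfl, rfl⟩ <;> intro x hx <;>
        exact ⟨by linarith [hx.1, hx.2], by linarith [hx.1, hx.2]⟩
    have hmemo : ∀ x ∈ Set.Ioo a (a+L), c + s*x ∈ Set.Ioo (0:ℝ) L := by
      rcases hsc with ⟨rfl, rfl⟩ | ⟨rfl, rfl⟩ <;> intro x hx <;>
        exact ⟨by linarith [hx.1, hx.2], by linarith [hx.1, hx.2]⟩
    have haff : ∀ x : ℝ, HasDerivAt (fun y : ℝ => c + s*y) s x := by
      intro x; simpa using ((hasDerivAt_id x).const_mul s).const_add c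
    have hchain_u : ∀ t ∈ Set.Ioo (0:ℝ) T, ∀ x ∈ Set.Ioo a (a+L),
        HasDerivAt (fun y => u (c + s*y) t) ((s:ℂ) * ux (c + s*x) t) x := by
      intro t ht x hx
      have hy := hmemo x hx
      have hg : HasDerivAt (fun z => u z t) (ux (c+s*x) t) (c+s*x) :=
        (hux t ht _ (Set.Ioo_subset_Icc_self hy)).hasDerivAt (Icc_mem_nhds hy.1 hy.2)
      have h2 := hg.scomp x (haff x)
      simpa [Function.comp_def, Complex.real_smul] using h2
    have hchain_ux : ∀ t ∈ Set.Ioo (0:ℝ) T, ∀ x ∈ Set.Ioo a (a+L),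
        HasDerivAt (fun y => ux (c + s*y) t) ((s:ℂ) * uxx (c + s*x) t) x := by
      intro t ht x hx
      have hy := hmemo x hx
      have hg : HasDerivAt (fun z => ux z t) (uxx (c+s*x) t) (c+s*x) :=
        (huxx t ht _ (Set.Ioo_subset_Icc_self hy)).hasDerivAt (Icc_mem_nhds hy.1 hy.2)
      have h2 := hg.scomp x (haff x)
      simpa [Function.comp_def, Complex.real_smul] using h2
    have hcont_affine : Continuous (fun y : ℝ => c + s*y) :=
      continuous_const.add (continuous_const.mul continuous_id)
    have hmapsTo : Set.MapsTo (fun y : ℝ => c + s*y) (Set.Icc a (a+L)) (Set.Icc 0 L) := hmem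
    have hcont_u : ∀ t ∈ Set.Ioo (0:ℝ) T,
        ContinuousOn (fun y => u (c + s*y) t) (Set.Icc a (a+L)) := by
      intro t ht
      have := (hucont_t t ht).comp hcont_affine.continuousOn hmapsTo
      simpa [Function.comp_def] using this
    have hcont_ux : ∀ t ∈ Set.Ioo (0:ℝ) T,
        ContinuousOn (fun y => ux (c + s*y) t) (Set.Icc a (a+L)) := by
      intro t ht
      have := (huxcont_t t ht).comp hcont_affine.continuousOn hmapsTo
      simpa [Function.comp_def] using this
    have hcont_uxx : ∀ t ∈ Set.Ioo (0:ℝ) T,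
        ContinuousOn (fun y => uxx (c + s*y) t) (Set.Icc a (a+L)) := by
      intro t ht
      have := (huxx_cont t ht).comp hcont_affine.continuousOn hmapsTo
      simpa [Function.comp_def] using this
    set GK : ℝ × ℝ → ℂ := fun p =>
      -Complex.I * ((s:ℂ) * U (c + s*p.1, p.2) * P2 p + (s:ℂ) * Ut (c + s*p.1, p.2) * φ p)
      with hGKdef
    have hGKcont : Continuous GK := by
      apply Continuous.mul continuous_const
      apply Continuous.add
      · exact ((continuous_const.mul (hUcont.comp ((hcont_affine.comp continuous_fst).prodMk
          continuous_snd))).mul hP2cont)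
      · exact ((continuous_const.mul (hUtcont.comp ((hcont_affine.comp continuous_fst).prodMk
          continuous_snd))).mul hφcont)
    have hGKsupp : ∀ p : ℝ × ℝ, p ∉ tsupport φ → GK p = 0 := by
      intro p hp
      obtain ⟨h0, _, h2, _⟩ := hzero p hp
      simp only [hGKdef]; rw [h0, h2]; ring
    have hprod : Integrable (fun p : ℝ × ℝ => GK (p.2, p.1))
        ((volume.restrict (Set.Ioo (0:ℝ) T)).prod (volume.restrict (Set.Ioo a (a+L)))) := by
      have hc : Continuous (fun p : ℝ × ℝ => GK (p.2, p.1)) :=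
        hGKcont.comp continuous_swap
      have hcs : HasCompactSupport (fun p : ℝ × ℝ => GK (p.2, p.1)) := by
        apply HasCompactSupport.intro (hφc.image continuous_swap)
        intro p hp
        apply hGKsupp
        intro hmem'
        exact hp ⟨(p.2, p.1), hmem', rfl⟩
      have hint : Integrable (fun p : ℝ × ℝ => GK (p.2, p.1)) (volume : Measure (ℝ × ℝ)) :=
        hc.integrable_of_hasCompactSupport hcs
      rw [Measure.prod_restrict, ← Measure.volume_eq_prod]
      exact hint.restrict
    have hC1 : Integrable (fun t => ∫ x in Set.Ioo a (a+L), GK (x, t))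
        (volume.restrict (Set.Ioo (0:ℝ) T)) := hprod.integral_prod_left
    -- inner time integral vanishes
    have hinner : ∀ x ∈ Set.Ioo a (a+L), (∫ t in Set.Ioo (0:ℝ) T, GK (x, t)) = 0 := by
      intro x hx
      have hyI : c + s*x ∈ Set.Ioo (0:ℝ) L := hmemo x hx
      have hyIcc : c + s*x ∈ Set.Icc (0:ℝ) L := Set.Ioo_subset_Icc_self hyI
      set c' : ℝ := t0/2 with hc'def
      set d' : ℝ := (t1+T)/2 with hd'def
      have hc'0 : 0 < c' := by simp only [hc'def]; linarith
      have hc't0 : c' < t0 := by simp only [hc'def]; linarith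
      have hd't1 : t1 < d' := by simp only [hd'def]; linarith
      have hd'T : d' < T := by simp only [hd'def]; linarith
      have hc'd' : c' ≤ d' := by linarith
      have huIcc : Set.uIcc c' d' = Set.Icc c' d' := Set.uIcc_of_le hc'd'
      have hsubT : Set.Icc c' d' ⊆ Set.Ioo (0:ℝ) T :=
        fun τ hτ => ⟨lt_of_lt_of_le hc'0 hτ.1, lt_of_le_of_lt hτ.2 hd'T⟩
      have hvanish : ∀ τ : ℝ, τ ∉ Set.Icc t0 t1 → GK (x, τ) = 0 := by
        intro τ hτ
        exact hGKsupp _ (fun hmem' => hτ (hst _ hmem'))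
      have h1 : (∫ t in Set.Ioo (0:ℝ) T, GK (x, t)) = ∫ t : ℝ, GK (x, t) :=
        setIntegral_eq_integral_of_forall_compl_eq_zero (fun τ hτ => hvanish τ
          (fun hmem' => hτ ⟨lt_of_lt_of_le ht0 hmem'.1, lt_of_le_of_lt hmem'.2 ht1⟩))
      have h2 : (∫ t : ℝ, GK (x, t)) = ∫ t in Set.Ioo c' d', GK (x, t) :=
        (setIntegral_eq_integral_of_forall_compl_eq_zero (fun τ hτ => hvanish τ
          (fun hmem' => hτ (show τ ∈ Set.Ioo c' d' from
            ⟨lt_of_lt_of_le hc't0 hmem'.1, lt_of_le_of_lt hmem'.2 hd't1⟩)))).symm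
      have h3 : (∫ t in Set.Ioo c' d', GK (x, t)) = ∫ t in c'..d', GK (x, t) := by
        rw [intervalIntegral.integral_of_le hc'd', integral_Ioc_eq_integral_Ioo]
      have hHd : ∀ τ ∈ Set.Icc c' d',
          HasDerivAt (fun τ' => -Complex.I * ((s:ℂ) * u (c + s*x) τ' * φ (x, τ')))
            (-Complex.I * ((s:ℂ) * ut (c + s*x) τ * φ (x, τ) +
              (s:ℂ) * u (c + s*x) τ * P2 (x, τ))) τ := by
        intro τ hτ
        have hτT := hsubT hτ
        have h4 : HasDerivAt (fun τ' => u (c + s*x) τ') (ut (c + s*x) τ) τ :=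
          hut _ hyIcc τ hτT
        have h5 : HasDerivAt (fun τ' => (s:ℂ) * u (c + s*x) τ') ((s:ℂ) * ut (c + s*x) τ) τ :=
          h4.const_mul _
        have h6 := (h5.mul (hP2d x τ)).const_mul (-Complex.I)
        refine h6.congr_deriv ?_
        ring
      have hGKeq : ∀ τ ∈ Set.Icc c' d', GK (x, τ) =
          -Complex.I * ((s:ℂ) * ut (c + s*x) τ * φ (x, τ) +
            (s:ℂ) * u (c + s*x) τ * P2 (x, τ)) := by
        intro τ hτ
        have hτT := hsubT hτ
        have hUeq' : U (c + s*x, τ) = u (c + s*x) τ := hUeq _ hyIcc τ ⟨hτT.1.le, hτT.2.le⟩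
        by_cases hτ' : τ ∈ Set.Icc t0 t1
        · have hUteq' : Ut (c + s*x, τ) = ut (c + s*x) τ := hUteq _ hyIcc τ hτ'
          simp only [hGKdef]
          rw [hUeq', hUteq']
          ring
        · have hφ0 : φ (x, τ) = 0 :=
            (hzero (x, τ) (fun hmem' => hτ' (hst _ hmem'))).1
          simp only [hGKdef]
          rw [hUeq', hφ0]
          ring
      have hcont_ut_t : ContinuousOn (fun τ => ut (c + s*x) τ) (Set.Icc c' d') := by
        have hsl : Continuous (fun τ : ℝ => ((c + s*x : ℝ), τ)) :=
          continuous_const.prodMk continuous_id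
        have := hut_cont.comp hsl.continuousOn
          (fun τ (hτ : τ ∈ Set.Icc c' d') => Set.mk_mem_prod hyIcc (hsubT hτ))
        simpa [Function.comp_def] using this
      have hcont_u_t : ContinuousOn (fun τ => u (c + s*x) τ) (Set.Icc c' d') :=
        fun τ hτ => (hut _ hyIcc τ (hsubT hτ)).continuousAt.continuousWithinAt
      have hφx_cont : Continuous (fun τ : ℝ => φ (x, τ)) :=
        hφcont.comp (continuous_const.prodMk continuous_id)
      have hP2x_cont : Continuous (fun τ : ℝ => P2 (x, τ)) :=
        hP2cont.comp (continuous_const.prodMk continuous_id)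
      have hint2 : IntervalIntegrable (fun τ => -Complex.I *
          ((s:ℂ) * ut (c + s*x) τ * φ (x, τ) + (s:ℂ) * u (c + s*x) τ * P2 (x, τ)))
          volume c' d' := by
        apply ContinuousOn.intervalIntegrable
        rw [huIcc]
        exact continuousOn_const.mul
          (((continuousOn_const.mul hcont_ut_t).mul hφx_cont.continuousOn).add
            ((continuousOn_const.mul hcont_u_t).mul hP2x_cont.continuousOn))
      have hφc' : φ (x, c') = 0 :=
        (hzero (x, c') (fun hmem' => absurd (hst _ hmem') (fun h => by
          exact absurd h.1 (not_le.mpr hc't0)))).1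
      have hφd' : φ (x, d') = 0 :=
        (hzero (x, d') (fun hmem' => absurd (hst _ hmem') (fun h => by
          exact absurd h.2 (not_le.mpr hd't1)))).1
      calc (∫ t in Set.Ioo (0:ℝ) T, GK (x, t)) = ∫ t : ℝ, GK (x, t) := h1
        _ = ∫ t in Set.Ioo c' d', GK (x, t) := h2
        _ = ∫ t in c'..d', GK (x, t) := h3
        _ = ∫ t in c'..d', -Complex.I * ((s:ℂ) * ut (c + s*x) t * φ (x, t) +
              (s:ℂ) * u (c + s*x) t * P2 (x, t)) :=
          intervalIntegral.integral_congr (fun τ hτ => hGKeq τ (huIcc ▸ hτ))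
        _ = (-Complex.I * ((s:ℂ) * u (c + s*x) d' * φ (x, d'))) -
            (-Complex.I * ((s:ℂ) * u (c + s*x) c' * φ (x, c'))) :=
          intervalIntegral.integral_eq_sub_of_hasDerivAt
            (fun τ hτ => hHd τ (huIcc ▸ hτ)) hint2
        _ = 0 := by rw [hφc', hφd']; ring
    have hC2 : (∫ t in Set.Ioo (0:ℝ) T, ∫ x in Set.Ioo a (a+L), GK (x, t)) = 0 := by
      rw [MeasureTheory.integral_integral_swap hprod]
      rw [setIntegral_congr_fun measurableSet_Ioo
        (fun x hx => hinner x hx : Set.EqOn _ (fun _ => (0:ℂ)) _)]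
      simp
    refine ⟨hC1, hC2, ?_⟩
    intro t ht
    have habL : a ≤ a + L := by linarith
    have hφt_cont : Continuous (fun x : ℝ => φ (x, t)) :=
      hφcont.comp (continuous_id.prodMk continuous_const)
    have hP1t_cont : Continuous (fun x : ℝ => P1 (x, t)) :=
      hP1cont.comp (continuous_id.prodMk continuous_const)
    have hP2t_cont : Continuous (fun x : ℝ => P2 (x, t)) :=
      hP2cont.comp (continuous_id.prodMk continuous_const)
    have hP11t_cont : Continuous (fun x : ℝ => P11 (x, t)) :=
      hP11cont.comp (continuous_id.prodMk continuous_const)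
    have h1c : ContinuousOn (fun x => (s:ℂ) * u (c + s*x) t) (Set.Icc a (a+L)) :=
      continuousOn_const.mul (hcont_u t ht)
    have hbigcont : ContinuousOn (fun x =>
        (s:ℂ) * u (c + s*x) t * (-Complex.I * P2 (x, t) - P11 (x, t)) +
        2 * (‖(s:ℂ) * u (c + s*x) t‖ : ℂ)^2 * ((s:ℂ) * u (c + s*x) t) * φ (x, t))
        (Set.Icc a (a+L)) := by
      refine ContinuousOn.add ?_ ?_
      · exact h1c.mul ((continuousOn_const.mul hP2t_cont.continuousOn).sub
          hP11t_cont.continuousOn)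
      · exact ((continuousOn_const.mul
          ((Complex.continuous_ofReal.comp_continuousOn h1c.norm).pow 2)).mul h1c).mul
          hφt_cont.continuousOn
    have hbigint : IntegrableOn (fun x =>
        (s:ℂ) * u (c + s*x) t * (-Complex.I * P2 (x, t) - P11 (x, t)) +
        2 * (‖(s:ℂ) * u (c + s*x) t‖ : ℂ)^2 * ((s:ℂ) * u (c + s*x) t) * φ (x, t))
        (Set.Ioo a (a+L)) volume :=
      hbigcont.integrableOn_Icc.mono_set Set.Ioo_subset_Icc_self
    have hGKtint : IntegrableOn (fun x => GK (x, t)) (Set.Ioo a (a+L)) volume :=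
      (((hGKcont.comp (continuous_id.prodMk continuous_const)).continuousOn :
        ContinuousOn (fun x => GK (x, t)) (Set.Icc a (a+L))).integrableOn_Icc).mono_set
        Set.Ioo_subset_Icc_self
    have hFd : ∀ x ∈ Set.Ioo a (a+L), HasDerivAt
        (fun x => (s:ℂ) * u (c + s*x) t * P1 (x, t) - ux (c + s*x) t * φ (x, t))
        ((s:ℂ) * u (c + s*x) t * P11 (x, t) - (s:ℂ) * uxx (c + s*x) t * φ (x, t)) x := by
      intro x hx
      have h1 := ((hchain_u t ht x hx).const_mul ((s:ℂ))).mul (hP11d x t)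
      have h2 := (hchain_ux t ht x hx).mul (hP1d x t)
      have h3 := h1.sub h2
      refine h3.congr_deriv ?_
      linear_combination (P1 (x, t) * ux (c + s*x) t) * hss
    have hFcont : ContinuousOn
        (fun x => (s:ℂ) * u (c + s*x) t * P1 (x, t) - ux (c + s*x) t * φ (x, t))
        (Set.Icc a (a+L)) :=
      (h1c.mul hP1t_cont.continuousOn).sub ((hcont_ux t ht).mul hφt_cont.continuousOn)
    have hF'int : IntervalIntegrable
        (fun x => (s:ℂ) * u (c + s*x) t * P11 (x, t) - (s:ℂ) * uxx (c + s*x) t * φ (x, t))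
        volume a (a+L) := by
      apply ContinuousOn.intervalIntegrable
      rw [Set.uIcc_of_le habL]
      exact (h1c.mul hP11t_cont.continuousOn).sub
        ((continuousOn_const.mul (hcont_uxx t ht)).mul hφt_cont.continuousOn)
    have hFTC := intervalIntegral.integral_eq_sub_of_hasDerivAt_of_le habL hFcont hFd hF'int
    have hDeq : ∀ x ∈ Set.Ioo a (a+L),
        ((s:ℂ) * u (c + s*x) t * (-Complex.I * P2 (x, t) - P11 (x, t)) +
          2 * (‖(s:ℂ) * u (c + s*x) t‖ : ℂ)^2 * ((s:ℂ) * u (c + s*x) t) * φ (x, t)) - GK (x, t)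
        = -((s:ℂ) * u (c + s*x) t * P11 (x, t) - (s:ℂ) * uxx (c + s*x) t * φ (x, t)) := by
      intro x hx
      have hyI := hmemo x hx
      have hyIcc := Set.Ioo_subset_Icc_self hyI
      have hUeq' : U (c + s*x, t) = u (c + s*x) t := hUeq _ hyIcc t ⟨ht.1.le, ht.2.le⟩
      by_cases ht' : t ∈ Set.Icc t0 t1
      · have hUteq' : Ut (c + s*x, t) = ut (c + s*x) t := hUteq _ hyIcc t ht'
        have hpde := hNLS _ hyI t ht
        simp only [hGKdef]
        rw [hUeq', hUteq', hsnorm]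
        linear_combination ((s:ℂ) * φ (x, t)) * hpde
      · obtain ⟨hφ0, _, _, hP110⟩ := hzero (x, t) (fun hm => ht' (hst _ hm))
        simp only [hGKdef]
        rw [hUeq', hφ0, hP110]
        ring
    refine ⟨hbigint, ?_⟩
    have hsub := integral_sub hbigint hGKtint
    have key : (∫ x in Set.Ioo a (a+L),
          ((s:ℂ) * u (c + s*x) t * (-Complex.I * P2 (x, t) - P11 (x, t)) +
            2 * (‖(s:ℂ) * u (c + s*x) t‖ : ℂ)^2 * ((s:ℂ) * u (c + s*x) t) * φ (x, t))) -
        (∫ x in Set.Ioo a (a+L), GK (x, t)) =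
        ((s:ℂ) * u (c + s*a) t * P1 (a, t) - ux (c + s*a) t * φ (a, t) -
          (s:ℂ) * u (c + s*(a+L)) t * P1 (a+L, t) + ux (c + s*(a+L)) t * φ (a+L, t)) := by
      rw [← hsub]
      rw [setIntegral_congr_fun measurableSet_Ioo hDeq]
      rw [integral_neg, ← integral_Ioc_eq_integral_Ioo,
        ← intervalIntegral.integral_of_le habL, hFTC]
      ring
    linear_combination key
  -- assembly
  set K : ℕ := 2 * N + 2 with hKdef
  set A : ℕ → ℝ := fun i => ((i:ℝ) - (K:ℝ)) * L with hAdef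
  have hstep : ∀ i : ℕ, A (i+1) = A i + L := by
    intro i; simp only [hAdef]; push_cast; ring
  have hA0 : A 0 = -((K:ℝ) * L) := by simp [hAdef]
  have hA2K : A (2*K) = (K:ℝ) * L := by simp only [hAdef]; push_cast; ring
  have hKL : R < (K:ℝ) * L := by
    have hN0 : (0:ℝ) ≤ (N:ℝ) := Nat.cast_nonneg N
    rw [hKdef]
    push_cast
    nlinarith [hRN, hL]
  -- the per-interval representation of q
  have hpack : ∀ i : ℕ, ∃ s c : ℝ,
      ((s = 1 ∧ c = -(A i)) ∨ (s = -1 ∧ c = A i + L)) ∧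
      ((Even i → s = 1 ∧ c + s * A i = 0 ∧ c + s * (A i + L) = L) ∧
       (¬ Even i → s = -1 ∧ c + s * A i = L ∧ c + s * (A i + L) = 0)) ∧
      (∀ t ∈ Set.Ioo (0:ℝ) T, ∀ x ∈ Set.Ioo (A i) (A i + L),
        q x t = (s:ℂ) * u (c + s*x) t) := by
    intro i
    by_cases hE : Even i
    · refine ⟨1, -(A i), Or.inl ⟨rfl, rfl⟩, ⟨fun _ => ⟨rfl, by ring, by ring⟩,
        fun h => absurd hE h⟩, ?_⟩
      intro t ht x hx
      obtain ⟨j, hj⟩ := hE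
      have hm : 2 * L * (((j:ℤ) - ((N:ℤ)+1) : ℤ):ℝ) = A i := by
        simp only [hAdef, hKdef, hj]; push_cast; ring
      have hx' : x - 2*L*(((j:ℤ) - ((N:ℤ)+1) : ℤ):ℝ) ∈ Set.Ioo (0:ℝ) L := by
        rw [hm]; exact ⟨by linarith [hx.1], by linarith [hx.2]⟩
      have hq' := hshift t ht (x - 2*L*(((j:ℤ) - ((N:ℤ)+1) : ℤ):ℝ)) ((j:ℤ) - ((N:ℤ)+1))
      have harg : x - 2*L*(((j:ℤ) - ((N:ℤ)+1) : ℤ):ℝ) + 2*L*(((j:ℤ) - ((N:ℤ)+1) : ℤ):ℝ)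
          = x := by ring
      rw [harg] at hq'
      rw [hq', hq1 t ht _ hx']
      have harg2 : -(A i) + 1*x = x - 2*L*(((j:ℤ) - ((N:ℤ)+1) : ℤ):ℝ) := by
        rw [← hm]; ring
      rw [harg2]
      simp
    · refine ⟨-1, A i + L, Or.inr ⟨rfl, rfl⟩, ⟨fun h => absurd h hE,
        fun _ => ⟨rfl, by ring, by ring⟩⟩, ?_⟩
      intro t ht x hx
      rw [Nat.not_even_iff_odd] at hE
      obtain ⟨j, hj⟩ := hE
      have hm : 2 * L * (((j:ℤ) - (N:ℤ) : ℤ):ℝ) = A i + L := by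
        simp only [hAdef, hKdef, hj]; push_cast; ring
      have hx' : x - 2*L*(((j:ℤ) - (N:ℤ) : ℤ):ℝ) ∈ Set.Ioo (-L) (0:ℝ) := by
        rw [hm]; exact ⟨by linarith [hx.1], by linarith [hx.2]⟩
      have hq' := hshift t ht (x - 2*L*(((j:ℤ) - (N:ℤ) : ℤ):ℝ)) ((j:ℤ) - (N:ℤ))
      have harg : x - 2*L*(((j:ℤ) - (N:ℤ) : ℤ):ℝ) + 2*L*(((j:ℤ) - (N:ℤ) : ℤ):ℝ) = x := by
        ring
      rw [harg] at hq'
      rw [hq', hq2 t ht _ hx']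
      have harg2 : A i + L + (-1)*x = -(x - 2*L*(((j:ℤ) - (N:ℤ) : ℤ):ℝ)) := by
        rw [← hm]; ring
      rw [harg2]
      push_cast
      ring
  choose sC cC hscC hparC hqC using hpack
  have hcore := fun i : ℕ => core (sC i) (A i) (cC i) (hscC i)
  have hKL0 : (0:ℝ) ≤ (K:ℝ) * L := mul_nonneg (Nat.cast_nonneg K) hL.le
  have hKcast : ((K:ℕ):ℝ) = 2*(N:ℝ) + 2 := by rw [hKdef]; push_cast; ring
  -- lattice point vanishing (for fixed t)
  have hlat : ∀ z t : ℝ, R < |z| → φ (z, t) = 0 ∧ P1 (z, t) = 0 := by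
    intro z t hz
    have hns : (z, t) ∉ tsupport φ := fun hm => absurd (hR _ hm) (not_le.mpr hz)
    obtain ⟨h0, h1, _, _⟩ := hzero _ hns
    exact ⟨h0, h1⟩
  -- main per-t identity
  have hmain : ∀ t ∈ Set.Ioo (0:ℝ) T,
      (∫ x : ℝ, (q x t * (-Complex.I * P2 (x, t) - P11 (x, t)) +
        2 * (‖q x t‖ : ℂ)^2 * q x t * φ (x, t))) =
      (∑ i ∈ Finset.range (2*K), (∫ x in Set.Ioo (A i) (A i + L),
        (-Complex.I * (((sC i):ℂ) * U ((cC i) + (sC i)*x, t) * P2 (x, t) +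
          ((sC i):ℂ) * Ut ((cC i) + (sC i)*x, t) * φ (x, t))))) +
      2 * (∑ j ∈ Finset.range K,
        (u 0 t * P1 (A (2*j), t) - u L t * P1 (A (2*j+1), t))) := by
    intro t ht
    have hxout : ∀ x : ℝ, x ∉ Set.Ioo (A 0) (A (2*K)) →
        (q x t * (-Complex.I * P2 (x, t) - P11 (x, t)) +
          2 * (‖q x t‖ : ℂ)^2 * q x t * φ (x, t)) = 0 := by
      intro x hx
      have hxR : R < |x| := by
        rw [Set.mem_Ioo, not_and_or, not_lt, not_lt, hA0, hA2K] at hx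
        have hKabs : (K:ℝ) * L ≤ |x| := by
          rcases hx with h | h
          · calc (K:ℝ)*L ≤ -x := by linarith
            _ ≤ |x| := neg_le_abs x
          · exact le_trans h (le_abs_self x)
        linarith [hKL]
      have hns : (x, t) ∉ tsupport φ := fun hm => absurd (hR _ hm) (not_le.mpr hxR)
      obtain ⟨h0, _, h2, h3⟩ := hzero _ hns
      rw [h0, h2, h3]; ring
    have hint : ∀ i : ℕ, i < 2*K → IntervalIntegrable
        (fun x => q x t * (-Complex.I * P2 (x, t) - P11 (x, t)) +
          2 * (‖q x t‖ : ℂ)^2 * q x t * φ (x, t)) volume (A i) (A (i+1)) := by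
      intro i _
      rw [hstep i]
      rw [intervalIntegrable_iff_integrableOn_Ioc_of_le (by linarith)]
      rw [integrableOn_Ioc_iff_integrableOn_Ioo]
      refine IntegrableOn.congr_fun (((hcore i).2.2 t ht).1) ?_ measurableSet_Ioo
      intro x hx
      simp only []
      rw [hqC i t ht x hx]
    have hdec : (∫ x : ℝ, (q x t * (-Complex.I * P2 (x, t) - P11 (x, t)) +
        2 * (‖q x t‖ : ℂ)^2 * q x t * φ (x, t))) =
        ∑ i ∈ Finset.range (2*K), (∫ x in Set.Ioo (A i) (A (i+1)),
          (q x t * (-Complex.I * P2 (x, t) - P11 (x, t)) +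
            2 * (‖q x t‖ : ℂ)^2 * q x t * φ (x, t))) := by
      rw [← setIntegral_eq_integral_of_forall_compl_eq_zero hxout]
      rw [← integral_Ioc_eq_integral_Ioo,
        ← intervalIntegral.integral_of_le (by rw [hA0, hA2K]; linarith : A 0 ≤ A (2*K))]
      rw [← intervalIntegral.sum_integral_adjacent_intervals hint]
      refine Finset.sum_congr rfl ?_
      intro i _
      rw [intervalIntegral.integral_of_le (by rw [hstep i]; linarith : A i ≤ A (i+1)),
        integral_Ioc_eq_integral_Ioo]
    have hstep2 : ∀ i ∈ Finset.range (2*K),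
        (∫ x in Set.Ioo (A i) (A (i+1)),
          (q x t * (-Complex.I * P2 (x, t) - P11 (x, t)) +
            2 * (‖q x t‖ : ℂ)^2 * q x t * φ (x, t))) =
        (∫ x in Set.Ioo (A i) (A i + L),
          (-Complex.I * (((sC i):ℂ) * U ((cC i) + (sC i)*x, t) * P2 (x, t) +
            ((sC i):ℂ) * Ut ((cC i) + (sC i)*x, t) * φ (x, t)))) +
        (((sC i):ℂ) * u ((cC i) + (sC i)*(A i)) t * P1 (A i, t) -
          ux ((cC i) + (sC i)*(A i)) t * φ (A i, t) -
          ((sC i):ℂ) * u ((cC i) + (sC i)*(A i+L)) t * P1 (A i+L, t) +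
          ux ((cC i) + (sC i)*(A i+L)) t * φ (A i+L, t)) := by
      intro i _
      rw [hstep i]
      rw [setIntegral_congr_fun measurableSet_Ioo
        (fun x hx => by beta_reduce; rw [hqC i t ht x hx] :
          Set.EqOn (fun x => q x t * (-Complex.I * P2 (x, t) - P11 (x, t)) +
            2 * (‖q x t‖ : ℂ)^2 * q x t * φ (x, t))
          (fun x => ((sC i):ℂ) * u ((cC i) + (sC i)*x) t * (-Complex.I * P2 (x, t) - P11 (x, t)) +
            2 * (‖((sC i):ℂ) * u ((cC i) + (sC i)*x) t‖ : ℂ)^2 *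
              (((sC i):ℂ) * u ((cC i) + (sC i)*x) t) * φ (x, t))
          (Set.Ioo (A i) (A i + L)))]
      exact ((hcore i).2.2 t ht).2
    have hSval : ∀ i : ℕ,
        (((sC i):ℂ) * u ((cC i) + (sC i)*(A i)) t * P1 (A i, t) -
          ux ((cC i) + (sC i)*(A i)) t * φ (A i, t) -
          ((sC i):ℂ) * u ((cC i) + (sC i)*(A i+L)) t * P1 (A i+L, t) +
          ux ((cC i) + (sC i)*(A i+L)) t * φ (A i+L, t)) =
        (((if Even i then u 0 t else -(u L t)) * P1 (A i, t) +
          (if Even (i+1) then u 0 t else -(u L t)) * P1 (A (i+1), t)) +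
         ((if Even (i+1) then ux 0 t else ux L t) * φ (A (i+1), t) -
          (if Even i then ux 0 t else ux L t) * φ (A i, t))) := by
      intro i
      by_cases hE : Even i
      · obtain ⟨hs, h0', hL'⟩ := (hparC i).1 hE
        rw [h0', hL', hs, hstep i]
        simp only [hE, Nat.even_add_one, not_true, if_true, if_false, not_false_iff]
        push_cast
        ring
      · obtain ⟨hs, h0', hL'⟩ := (hparC i).2 hE
        rw [h0', hL', hs, hstep i]
        simp only [hE, Nat.even_add_one, not_false_iff, if_true, if_false]
        push_cast
        ring
    have hφA0 := hlat (A 0) t (by rw [hA0, abs_neg, abs_of_nonneg hKL0]; exact hKL)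
    have hφA2K := hlat (A (2*K)) t (by rw [hA2K, abs_of_nonneg hKL0]; exact hKL)
    have hsum : (∑ i ∈ Finset.range (2*K),
        (((sC i):ℂ) * u ((cC i) + (sC i)*(A i)) t * P1 (A i, t) -
          ux ((cC i) + (sC i)*(A i)) t * φ (A i, t) -
          ((sC i):ℂ) * u ((cC i) + (sC i)*(A i+L)) t * P1 (A i+L, t) +
          ux ((cC i) + (sC i)*(A i+L)) t * φ (A i+L, t))) =
        2 * (∑ j ∈ Finset.range K,
          (u 0 t * P1 (A (2*j), t) - u L t * P1 (A (2*j+1), t))) := by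
      rw [Finset.sum_congr rfl (fun i _ => hSval i)]
      rw [Finset.sum_add_distrib, Finset.sum_add_distrib,
        Finset.sum_range_sub (fun i => (if Even i then ux 0 t else ux L t) * φ (A i, t))]
      have hshiftsum : (∑ i ∈ Finset.range (2*K),
          (if Even (i+1) then u 0 t else -(u L t)) * P1 (A (i+1), t)) =
          (∑ i ∈ Finset.range (2*K), (if Even i then u 0 t else -(u L t)) * P1 (A i, t)) +
          (if Even (2*K) then u 0 t else -(u L t)) * P1 (A (2*K), t) -
          (if Even 0 then u 0 t else -(u L t)) * P1 (A 0, t) := by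
        have h1 := Finset.sum_range_succ'
          (fun i => (if Even i then u 0 t else -(u L t)) * P1 (A i, t)) (2*K)
        have h2 := Finset.sum_range_succ
          (fun i => (if Even i then u 0 t else -(u L t)) * P1 (A i, t)) (2*K)
        linear_combination h2 - h1
      rw [hshiftsum, hφA0.1, hφA0.2, hφA2K.1, hφA2K.2]
      rw [sum_range_two_mul' K (fun i => (if Even i then u 0 t else -(u L t)) * P1 (A i, t))]
      have hpair : ∀ j ∈ Finset.range K,
          ((if Even (2*j) then u 0 t else -(u L t)) * P1 (A (2*j), t) +
            (if Even (2*j+1) then u 0 t else -(u L t)) * P1 (A (2*j+1), t)) =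
          (u 0 t * P1 (A (2*j), t) - u L t * P1 (A (2*j+1), t)) := by
        intro j _
        have h1 : Even (2*j) := even_two_mul j
        have h2 : ¬ Even (2*j+1) := by simp [Nat.even_add_one, h1]
        rw [if_pos h1, if_neg h2]
        ring
      rw [Finset.sum_congr rfl hpair]
      ring
    rw [hdec, Finset.sum_congr rfl hstep2, Finset.sum_add_distrib, hsum]
  -- rewrite the goal in terms of P1, P2, P11
  have hderiv11' : ∀ x t : ℝ, deriv (fun y => P1 (y, t)) x = P11 (x, t) :=
    fun x t => (hP11d x t).deriv
  simp only [hderiv1, hderiv2, hderiv11']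
  -- integrability of the boundary sum
  have hZUcont : Continuous (fun t => ∑ j ∈ Finset.range K,
      (U (0, t) * P1 (A (2*j), t) - U (L, t) * P1 (A (2*j+1), t))) := by
    apply continuous_finset_sum
    intro j _
    exact ((hUcont.comp (continuous_const.prodMk continuous_id)).mul
      (hP1cont.comp (continuous_const.prodMk continuous_id))).sub
      ((hUcont.comp (continuous_const.prodMk continuous_id)).mul
      (hP1cont.comp (continuous_const.prodMk continuous_id)))
  have hZUint : IntegrableOn (fun t => ∑ j ∈ Finset.range K,
      (U (0, t) * P1 (A (2*j), t) - U (L, t) * P1 (A (2*j+1), t))) (Set.Ioo 0 T) volume :=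
    ((hZUcont.continuousOn :
      ContinuousOn _ (Set.Icc 0 T)).integrableOn_Icc).mono_set Set.Ioo_subset_Icc_self
  have hU0T : ∀ t ∈ Set.Ioo (0:ℝ) T, U (0, t) = u 0 t ∧ U (L, t) = u L t := by
    intro t ht
    exact ⟨hUeq 0 (Set.left_mem_Icc.mpr hL.le) t ⟨ht.1.le, ht.2.le⟩,
      hUeq L (Set.right_mem_Icc.mpr hL.le) t ⟨ht.1.le, ht.2.le⟩⟩
  -- tsum identification
  have hts : ∀ t ∈ Set.Ioo (0:ℝ) T,
      (∑' n : ℤ, (u 0 t * P1 (2*(n:ℝ)*L, t) - u L t * P1 ((2*(n:ℝ)+1)*L, t))) =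
      ∑ j ∈ Finset.range K, (U (0, t) * P1 (A (2*j), t) - U (L, t) * P1 (A (2*j+1), t)) := by
    intro t ht
    have hout : ∀ n : ℤ, n ∉ Finset.Icc (-(N:ℤ)-1) (N:ℤ) →
        (u 0 t * P1 (2*(n:ℝ)*L, t) - u L t * P1 ((2*(n:ℝ)+1)*L, t)) = 0 := by
      intro n hn
      rw [Finset.mem_Icc, not_and_or, not_le, not_le] at hn
      have hbounds : R < |2*(n:ℝ)*L| ∧ R < |(2*(n:ℝ)+1)*L| := by
        rcases hn with h | h
        · have hn' : (n:ℝ) ≤ -(N:ℝ)-2 := by exact_mod_cast (by omega : n ≤ -(N:ℤ)-2)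
          constructor
          · have h1 : (K:ℝ)*L ≤ -(2*(n:ℝ)*L) := by rw [hKcast]; nlinarith [hL.le]
            calc R < (K:ℝ)*L := hKL
            _ ≤ -(2*(n:ℝ)*L) := h1
            _ ≤ |2*(n:ℝ)*L| := neg_le_abs _
          · have h1 : (K:ℝ)*L ≤ -((2*(n:ℝ)+1)*L) := by rw [hKcast]; nlinarith [hL.le]
            calc R < (K:ℝ)*L := hKL
            _ ≤ -((2*(n:ℝ)+1)*L) := h1
            _ ≤ |(2*(n:ℝ)+1)*L| := neg_le_abs _
        · have hn' : (N:ℝ)+1 ≤ (n:ℝ) := by exact_mod_cast (by omega : (N:ℤ)+1 ≤ n)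
          constructor
          · have h1 : (K:ℝ)*L ≤ 2*(n:ℝ)*L := by rw [hKcast]; nlinarith [hL.le]
            calc R < (K:ℝ)*L := hKL
            _ ≤ 2*(n:ℝ)*L := h1
            _ ≤ |2*(n:ℝ)*L| := le_abs_self _
          · have h1 : (K:ℝ)*L ≤ (2*(n:ℝ)+1)*L := by rw [hKcast]; nlinarith [hL.le]
            calc R < (K:ℝ)*L := hKL
            _ ≤ (2*(n:ℝ)+1)*L := h1
            _ ≤ |(2*(n:ℝ)+1)*L| := le_abs_self _
      rw [(hlat _ t hbounds.1).2, (hlat _ t hbounds.2).2]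
      ring
    rw [tsum_eq_sum (s := Finset.Icc (-(N:ℤ)-1) (N:ℤ)) hout]
    refine Finset.sum_nbij' (i := fun n : ℤ => (n + (N:ℤ) + 1).toNat)
      (j := fun j : ℕ => (j:ℤ) - (N:ℤ) - 1) ?_ ?_ ?_ ?_ ?_
    · intro n hn
      beta_reduce
      rw [Finset.mem_Icc] at hn
      rw [Finset.mem_range, hKdef]
      omega
    · intro j hj
      beta_reduce
      rw [Finset.mem_range, hKdef] at hj
      rw [Finset.mem_Icc]
      omega
    · intro n hn
      beta_reduce
      rw [Finset.mem_Icc] at hn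
      omega
    · intro j hj
      beta_reduce
      rw [Finset.mem_range, hKdef] at hj
      omega
    · intro n hn
      rw [Finset.mem_Icc] at hn
      have hc : (((n + (N:ℤ) + 1).toNat : ℕ) : ℝ) = (n:ℝ) + (N:ℝ) + 1 := by
        have h1 : ((n + (N:ℤ) + 1).toNat : ℤ) = n + (N:ℤ) + 1 :=
          Int.toNat_of_nonneg (by omega)
        exact_mod_cast congrArg (fun z : ℤ => (z : ℝ)) h1
      have hA1 : A (2 * ((n + (N:ℤ) + 1).toNat)) = 2*(n:ℝ)*L := by
        simp only [hAdef]
        push_cast [hc, hKcast]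
        ring
      have hA2 : A (2 * ((n + (N:ℤ) + 1).toNat) + 1) = (2*(n:ℝ)+1)*L := by
        simp only [hAdef]
        push_cast [hc, hKcast]
        ring
      rw [hA1, hA2, (hU0T t ht).1, (hU0T t ht).2]
  -- the final computation
  have hEq1 : Set.EqOn
      (fun t => ∫ x : ℝ, (q x t * (-Complex.I * P2 (x, t) - P11 (x, t)) +
        2 * (‖q x t‖ : ℂ)^2 * q x t * φ (x, t)))
      (fun t => (∑ i ∈ Finset.range (2*K), (∫ x in Set.Ioo (A i) (A i + L),
        (-Complex.I * (((sC i):ℂ) * U ((cC i) + (sC i)*x, t) * P2 (x, t) +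
          ((sC i):ℂ) * Ut ((cC i) + (sC i)*x, t) * φ (x, t))))) +
       2 * (∑ j ∈ Finset.range K, (U (0, t) * P1 (A (2*j), t) - U (L, t) * P1 (A (2*j+1), t))))
      (Set.Ioo 0 T) := by
    intro t ht
    beta_reduce
    rw [hmain t ht, (hU0T t ht).1, (hU0T t ht).2]
  rw [setIntegral_congr_fun measurableSet_Ioo hEq1]
  rw [integral_add (integrable_finset_sum _ (fun i _ => (hcore i).1)) (hZUint.const_mul 2)]
  rw [integral_finset_sum _ (fun i _ => (hcore i).1)]
  rw [Finset.sum_eq_zero (fun i _ => (hcore i).2.1), zero_add]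
  rw [integral_const_mul]
  congr 1
  exact (setIntegral_congr_fun measurableSet_Ioo
    (fun t ht => by beta_reduce; rw [hts t ht])).symm
end

section
/- Fix g ≥ 0 and consider the open set Ω ⊂ ℝ^{2g+2} × ℝ^{g+1} of points (E₀, ..., E_{2g+1}, α₀, ..., α_g) with E₀ < E₁ < ... < E_{2g+1} and E_{2k} < α_k < E_{2k+1} for each k. For 0 ≤ k ≤ g define c_k = sqrt( |∏_{j=0}^{2g+1}(α_k − E_j)| / ∏_{j≠k}(α_k − α_j)² ), and define the vector field V_k on Ω by: dE_j/dτ = c_k/(E_j − α_k) for j = 0,...,2g+1; dα_j/dτ = c_k/(α_j − α_k) for j ≠ k; and dα_k/dτ = (1/2) Σ_{j=0}^{2g+1} c_k/(E_j − α_k) − Σ_{j≠k} c_k/(α_j − α_k). Then each V_k is smooth on Ω, and the vector fields commute pairwise: for all j, k, the Lie bracket vanishes, i.e. (DV_k)[V_j] − (DV_j)[V_k] = 0 at every point of Ω, where DV denotes the Fréchet derivative of V. -/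
set_option autoImplicit false

open Finset ContinuousLinearMap

section AbstractIsoperiodic


noncomputable def rho (e t : ℝ) : ℝ := |t| ^ e

theorem rho_hasDerivAt (e : ℝ) {t : ℝ} (ht : t ≠ 0) :
    HasDerivAt (rho e) (e * rho e t / t) t := by
  rcases ht.lt_or_gt with h | h
  · have h1 : HasDerivAt (fun s : ℝ => (-s) ^ e) (e * (-t) ^ (e - 1) * (-1)) t := by
      have hb : HasDerivAt (fun s : ℝ => -s) (-1 : ℝ) t := (hasDerivAt_id t).neg
      exact (Real.hasDerivAt_rpow_const (Or.inl (by linarith))).comp t hb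
    have h2 : HasDerivAt (rho e) (e * (-t) ^ (e - 1) * (-1)) t := by
      apply h1.congr_of_eventuallyEq
      filter_upwards [eventually_lt_nhds h] with s hs
      rw [rho, abs_of_neg hs]
    convert h2 using 1
    rw [rho, abs_of_neg h, Real.rpow_sub (by linarith) e 1, Real.rpow_one]
    field_simp
  · have h1 : HasDerivAt (fun s : ℝ => s ^ e) (e * t ^ (e - 1)) t :=
      Real.hasDerivAt_rpow_const (Or.inl (ne_of_gt h))
    have h2 : HasDerivAt (rho e) (e * t ^ (e - 1)) t := by
      apply h1.congr_of_eventuallyEq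
      filter_upwards [eventually_gt_nhds h] with s hs
      rw [rho, abs_of_pos hs]
    convert h2 using 1
    rw [rho, abs_of_pos h, Real.rpow_sub h e 1, Real.rpow_one]
    field_simp

theorem rho_contDiffAt (e : ℝ) {t : ℝ} (ht : t ≠ 0) {n : WithTop ℕ∞} :
    ContDiffAt ℝ n (rho e) t := by
  rcases ht.lt_or_gt with h | h
  · have h1 : ContDiffAt ℝ n (fun s : ℝ => (-s) ^ e) t :=
      (Real.contDiffAt_rpow_const_of_ne (by linarith)).comp t (contDiff_neg.contDiffAt)
    apply h1.congr_of_eventuallyEq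
    filter_upwards [eventually_lt_nhds h] with s hs
    rw [rho, abs_of_neg hs]
  · have h1 : ContDiffAt ℝ n (fun s : ℝ => s ^ e) t :=
      Real.contDiffAt_rpow_const_of_ne (ne_of_gt h)
    apply h1.congr_of_eventuallyEq
    filter_upwards [eventually_gt_nhds h] with s hs
    rw [rho, abs_of_pos hs]

variable {ι : Type*} [Fintype ι] [DecidableEq ι]

/-- coordinate projection as a CLM -/
noncomputable def pr (i : ι) : (ι → ℝ) →L[ℝ] ℝ := ContinuousLinearMap.proj i

@[simp] theorem pr_apply (i : ι) (v : ι → ℝ) : pr i v = v i := rfl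

/-- abstract coefficient -/
noncomputable def aC (ε : ι → ℝ) (k : ι) (y : ι → ℝ) : ℝ :=
  ∏ i ∈ univ.erase k, rho (ε i) (y i - y k)

/-- abstract vector field -/
noncomputable def aV (ε : ι → ℝ) (k : ι) (y : ι → ℝ) : ι → ℝ := fun m =>
  if m = k then aC ε k y * ∑ i ∈ univ.erase k, ε i / (y i - y k)
  else aC ε k y / (y m - y k)

/-- logarithmic derivative functional of `aC` -/
noncomputable def ell (ε : ι → ℝ) (k : ι) (y : ι → ℝ) : (ι → ℝ) →L[ℝ] ℝ :=
  ∑ i ∈ univ.erase k, (ε i / (y i - y k)) • (pr i - pr k)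

theorem sub_hasFDerivAt (i k : ι) (y : ι → ℝ) :
    HasFDerivAt (fun y : ι → ℝ => y i - y k) (pr i - pr k) y :=
  (hasFDerivAt_apply i y).sub (hasFDerivAt_apply k y)

theorem aC_hasFDerivAt (ε : ι → ℝ) (k : ι) {y : ι → ℝ} (hy : ∀ i, i ≠ k → y i ≠ y k) :
    HasFDerivAt (aC ε k) (aC ε k y • ell ε k y) y := by
  have key : ∀ i ∈ univ.erase k,
      HasFDerivAt (fun y : ι → ℝ => rho (ε i) (y i - y k))
        ((ε i * rho (ε i) (y i - y k) / (y i - y k)) • (pr i - pr k)) y :=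
    fun i hi => by
      have := (rho_hasDerivAt (ε i) (sub_ne_zero.2 (hy i (mem_erase.1 hi).1))).comp_hasFDerivAt
        y (sub_hasFDerivAt i k y)
      exact this
  have h := HasFDerivAt.finset_prod key
  have : HasFDerivAt (aC ε k)
      (∑ i ∈ univ.erase k, (∏ j ∈ (univ.erase k).erase i, rho (ε j) (y j - y k)) •
        ((ε i * rho (ε i) (y i - y k) / (y i - y k)) • (pr i - pr k))) y := h
  convert this using 1
  rw [ell, smul_sum]
  refine Finset.sum_congr rfl fun i hi => ?_
  rw [smul_smul, smul_smul]
  congr 1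
  have hprod : (∏ j ∈ (univ.erase k).erase i, rho (ε j) (y j - y k)) * rho (ε i) (y i - y k)
      = aC ε k y := Finset.prod_erase_mul _ _ hi
  rw [← hprod]
  ring

theorem aC_contDiffAt (ε : ι → ℝ) (k : ι) {y : ι → ℝ} (hy : ∀ i, i ≠ k → y i ≠ y k)
    {n : WithTop ℕ∞} : ContDiffAt ℝ n (aC ε k) y := by
  have : ∀ s : Finset ι, (∀ i ∈ s, i ≠ k) →
      ContDiffAt ℝ n (fun y : ι → ℝ => ∏ i ∈ s, rho (ε i) (y i - y k)) y := by
    intro s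
    induction s using Finset.cons_induction with
    | empty => intro _; simpa using contDiffAt_const
    | cons a s ha ih =>
      intro hs
      simp only [Finset.prod_cons]
      have h1 : ContDiffAt ℝ n (fun y : ι → ℝ => rho (ε a) (y a - y k)) y :=
        (rho_contDiffAt (ε a) (sub_ne_zero.2 (hy a (hs a (mem_cons_self a s))))).comp y
          ((contDiff_apply ℝ ℝ a).sub (contDiff_apply ℝ ℝ k)).contDiffAt
      exact h1.mul (ih fun i hi => hs i (mem_cons.2 (Or.inr hi)))
  exact this _ (fun i hi => (mem_erase.1 hi).1)

/-- derivative of the `m`-th component of `aV` -/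
noncomputable def aDc (ε : ι → ℝ) (k : ι) (y : ι → ℝ) (m : ι) : (ι → ℝ) →L[ℝ] ℝ :=
  if m = k then
    (aC ε k y * ∑ i ∈ univ.erase k, ε i / (y i - y k)) • ell ε k y
      + ∑ i ∈ univ.erase k, (-(aC ε k y) * ε i / (y i - y k) ^ 2) • (pr i - pr k)
  else
    (aC ε k y / (y m - y k)) • ell ε k y + (-(aC ε k y) / (y m - y k) ^ 2) • (pr m - pr k)

theorem aV_comp_hasFDerivAt (ε : ι → ℝ) (k : ι) {y : ι → ℝ}
    (hy : ∀ i, i ≠ k → y i ≠ y k) (m : ι) :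
    HasFDerivAt (fun y => aV ε k y m) (aDc ε k y m) y := by
  by_cases hmk : m = k
  · subst hmk
    have hS : HasFDerivAt (fun y : ι → ℝ => ∑ i ∈ univ.erase m, ε i * (y i - y m)⁻¹)
        (∑ i ∈ univ.erase m, ε i • ((-((y i - y m) ^ 2)⁻¹) • (pr i - pr m))) y := by
      apply HasFDerivAt.fun_sum
      intro i hi
      have hne : y i - y m ≠ 0 := sub_ne_zero.2 (hy i (mem_erase.1 hi).1)
      exact ((hasDerivAt_inv hne).comp_hasFDerivAt y (sub_hasFDerivAt i m y)).const_mul (ε i)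
    have h := (aC_hasFDerivAt ε m hy).mul hS
    have heq : (fun y : ι → ℝ => aV ε m y m)
        = fun y : ι → ℝ => aC ε m y * ∑ i ∈ univ.erase m, ε i * (y i - y m)⁻¹ := by
      funext z; simp [aV, div_eq_mul_inv]
    rw [heq]
    apply h.congr_fderiv
    rw [aDc, if_pos rfl]
    ext v
    simp only [ContinuousLinearMap.add_apply, ContinuousLinearMap.smul_apply,
      ContinuousLinearMap.coe_sum', Finset.sum_apply, ContinuousLinearMap.sub_apply,
      pr_apply, smul_eq_mul]
    have hsum : ∑ i ∈ univ.erase m, -(aC ε m y) * ε i / (y i - y m) ^ 2 * (v i - v m)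
        = ∑ i ∈ univ.erase m, aC ε m y * (ε i * (-((y i - y m) ^ 2)⁻¹ * (v i - v m))) :=
      Finset.sum_congr rfl fun i _ => by rw [div_eq_mul_inv]; ring
    rw [hsum, Finset.mul_sum]
    simp only [div_eq_mul_inv]
    ring
  · have hne : y m - y k ≠ 0 := sub_ne_zero.2 (hy m hmk)
    have h1 : HasFDerivAt (fun y : ι → ℝ => (y m - y k)⁻¹)
        ((-((y m - y k) ^ 2)⁻¹) • (pr m - pr k)) y :=
      (hasDerivAt_inv hne).comp_hasFDerivAt y (sub_hasFDerivAt m k y)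
    have h := (aC_hasFDerivAt ε k hy).mul h1
    have heq : (fun y : ι → ℝ => aV ε k y m)
        = fun y : ι → ℝ => aC ε k y * (y m - y k)⁻¹ := by
      funext z; simp [aV, if_neg hmk, div_eq_mul_inv]
    rw [heq]
    apply h.congr_fderiv
    rw [aDc, if_neg hmk]
    ext v
    simp only [ContinuousLinearMap.add_apply, ContinuousLinearMap.smul_apply,
      ContinuousLinearMap.sub_apply, pr_apply, smul_eq_mul]
    field_simp
    ring

theorem aV_hasFDerivAt (ε : ι → ℝ) (k : ι) {y : ι → ℝ} (hy : ∀ i, i ≠ k → y i ≠ y k) :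
    HasFDerivAt (aV ε k) (ContinuousLinearMap.pi (aDc ε k y)) y :=
  hasFDerivAt_pi.2 (aV_comp_hasFDerivAt ε k hy)

theorem aV_contDiffAt (ε : ι → ℝ) (k : ι) {y : ι → ℝ} (hy : ∀ i, i ≠ k → y i ≠ y k)
    {n : WithTop ℕ∞} : ContDiffAt ℝ n (aV ε k) y := by
  rw [contDiffAt_pi]
  intro m
  by_cases hmk : m = k
  · subst hmk
    have heq : (fun y : ι → ℝ => aV ε m y m)
        = fun y : ι → ℝ => aC ε m y * ∑ i ∈ univ.erase m, ε i / (y i - y m) := by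
      funext z; simp [aV]
    rw [heq]
    refine (aC_contDiffAt ε m hy).mul (ContDiffAt.sum fun i hi => ?_)
    exact contDiffAt_const.div
      (((contDiff_apply ℝ ℝ i).sub (contDiff_apply ℝ ℝ m)).contDiffAt)
      (sub_ne_zero.2 (hy i (mem_erase.1 hi).1))
  · have heq : (fun y : ι → ℝ => aV ε k y m)
        = fun y : ι → ℝ => aC ε k y / (y m - y k) := by
      funext z; simp [aV, if_neg hmk]
    rw [heq]
    exact (aC_contDiffAt ε k hy).div
      (((contDiff_apply ℝ ℝ m).sub (contDiff_apply ℝ ℝ k)).contDiffAt)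
      (sub_ne_zero.2 (hy m hmk))

theorem aV_apply_ne (ε : ι → ℝ) (j : ι) (y : ι → ℝ) {i : ι} (hij : i ≠ j) :
    aV ε j y i = aC ε j y / (y i - y j) := by simp [aV, hij]

theorem aV_apply_self (ε : ι → ℝ) (j : ι) (y : ι → ℝ) :
    aV ε j y j = aC ε j y * ∑ i ∈ univ.erase j, ε i / (y i - y j) := by simp [aV]

theorem ell_apply (ε : ι → ℝ) (k : ι) (y v : ι → ℝ) :
    ell ε k y v = ∑ i ∈ univ.erase k, ε i / (y i - y k) * (v i - v k) := by
  simp [ell, ContinuousLinearMap.sum_apply, ContinuousLinearMap.smul_apply,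
    ContinuousLinearMap.sub_apply, pr_apply, smul_eq_mul]

section Bracket

variable (ε : ι → ℝ) {j k : ι} {y : ι → ℝ}

theorem ell_aV (hjk : j ≠ k) (hεj : ε j = -1) (hεk : ε k = -1)
    (hgj : ∀ i, i ≠ j → y i ≠ y j) (hgk : ∀ i, i ≠ k → y i ≠ y k) :
    ell ε k y (aV ε j y) = -2 * aC ε j y * ((y k - y j)⁻¹) ^ 2 := by
  have hD : y k - y j ≠ 0 := sub_ne_zero.2 (hgj k (Ne.symm hjk))
  have hjmem : j ∈ univ.erase k := mem_erase.2 ⟨hjk, mem_univ j⟩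
  have hkmem : k ∈ univ.erase j := mem_erase.2 ⟨Ne.symm hjk, mem_univ k⟩
  rw [ell_apply, ← Finset.add_sum_erase _ _ hjmem]
  have huk : aV ε j y k = aC ε j y / (y k - y j) := aV_apply_ne ε j y (Ne.symm hjk)
  have hsum : ∑ i ∈ (univ.erase k).erase j, ε i / (y i - y k) * (aV ε j y i - aV ε j y k)
      = ∑ i ∈ (univ.erase k).erase j,
        (-(aC ε j y) * (y k - y j)⁻¹) * (ε i / (y i - y j)) := by
    refine Finset.sum_congr rfl fun i hi => ?_
    obtain ⟨hij, hik'⟩ := mem_erase.1 hi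
    have hik : i ≠ k := (mem_erase.1 hik').1
    have h1 : y i - y k ≠ 0 := sub_ne_zero.2 (hgk i hik)
    have h2 : y i - y j ≠ 0 := sub_ne_zero.2 (hgj i hij)
    rw [aV_apply_ne ε j y hij, huk]
    field_simp
    ring
  rw [hsum, ← Finset.mul_sum, Finset.erase_right_comm, Finset.sum_erase_eq_sub hkmem, huk,
    aV_apply_self]
  have hkj : y j - y k ≠ 0 := sub_ne_zero.2 (hgk j hjk)
  rw [hεj, hεk]
  field_simp
  ring

theorem aDc_symm (hjk : j ≠ k) {m : ι} (hmj : m ≠ j) (hεj : ε j = -1) (hεk : ε k = -1)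
    (hgj : ∀ i, i ≠ j → y i ≠ y j) (hgk : ∀ i, i ≠ k → y i ≠ y k) :
    aDc ε k y m (aV ε j y) = aDc ε j y m (aV ε k y) := by
  have hD : y k - y j ≠ 0 := sub_ne_zero.2 (hgj k (Ne.symm hjk))
  have hD' : y j - y k ≠ 0 := sub_ne_zero.2 (hgk j hjk)
  have hjmem : j ∈ univ.erase k := mem_erase.2 ⟨hjk, mem_univ j⟩
  have hkmem : k ∈ univ.erase j := mem_erase.2 ⟨Ne.symm hjk, mem_univ k⟩
  have hLk : ell ε k y (aV ε j y) = -2 * aC ε j y * ((y k - y j)⁻¹) ^ 2 :=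
    ell_aV ε hjk hεj hεk hgj hgk
  have hLj : ell ε j y (aV ε k y) = -2 * aC ε k y * ((y j - y k)⁻¹) ^ 2 :=
    ell_aV ε (Ne.symm hjk) hεk hεj hgk hgj
  have huk : aV ε j y k = aC ε j y / (y k - y j) := aV_apply_ne ε j y (Ne.symm hjk)
  have hvj : aV ε k y j = aC ε k y / (y j - y k) := aV_apply_ne ε k y hjk
  by_cases hmk : m = k
  · subst hmk
    rw [aDc, aDc, if_pos rfl, if_neg (Ne.symm hjk)]
    simp only [ContinuousLinearMap.add_apply, ContinuousLinearMap.smul_apply,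
      ContinuousLinearMap.coe_sum', Finset.sum_apply, ContinuousLinearMap.sub_apply,
      pr_apply, smul_eq_mul]
    rw [hLk, hLj, ← Finset.add_sum_erase _
      (fun i => -(aC ε m y) * ε i / (y i - y m) ^ 2 * (aV ε j y i - aV ε j y m)) hjmem]
    have hsum : ∑ i ∈ (univ.erase m).erase j,
        -(aC ε m y) * ε i / (y i - y m) ^ 2 * (aV ε j y i - aV ε j y m)
        = ∑ i ∈ (univ.erase m).erase j,
          ((-(aC ε j y * aC ε m y) * ((y m - y j)⁻¹) ^ 2) * (ε i / (y i - y j))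
            + ((aC ε j y * aC ε m y) * ((y m - y j)⁻¹) ^ 2) * (ε i / (y i - y m))) := by
      refine Finset.sum_congr rfl fun i hi => ?_
      obtain ⟨hij, him'⟩ := mem_erase.1 hi
      have him : i ≠ m := (mem_erase.1 him').1
      have h1 : y i - y m ≠ 0 := sub_ne_zero.2 (hgk i him)
      have h2 : y i - y j ≠ 0 := sub_ne_zero.2 (hgj i hij)
      rw [aV_apply_ne ε j y hij, huk]
      field_simp
      ring
    have hSA : ∑ i ∈ (univ.erase m).erase j, ε i / (y i - y j)
        = (∑ i ∈ univ.erase j, ε i / (y i - y j)) - ε m / (y m - y j) := by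
      rw [Finset.erase_right_comm]; exact Finset.sum_erase_eq_sub hkmem
    have hSB : ∑ i ∈ (univ.erase m).erase j, ε i / (y i - y m)
        = (∑ i ∈ univ.erase m, ε i / (y i - y m)) - ε j / (y j - y m) :=
      Finset.sum_erase_eq_sub hjmem
    rw [hsum, Finset.sum_add_distrib, ← Finset.mul_sum, ← Finset.mul_sum,
      hSA, hSB, huk, hvj, aV_apply_self, aV_apply_self]
    set PJ := ∑ i ∈ univ.erase j, ε i / (y i - y j) with hPJ
    set PK := ∑ i ∈ univ.erase m, ε i / (y i - y m) with hPK
    rw [hεj, hεk]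
    field_simp
    ring
  · have hmknum : y m - y k ≠ 0 := sub_ne_zero.2 (hgk m hmk)
    have hmjnum : y m - y j ≠ 0 := sub_ne_zero.2 (hgj m hmj)
    rw [aDc, aDc, if_neg hmk, if_neg hmj]
    simp only [ContinuousLinearMap.add_apply, ContinuousLinearMap.smul_apply,
      ContinuousLinearMap.sub_apply, pr_apply, smul_eq_mul]
    rw [hLk, hLj, aV_apply_ne ε j y hmj, aV_apply_ne ε k y hmk, huk, hvj]
    field_simp
    ring

theorem abstract_bracket (hjk : j ≠ k) (hεj : ε j = -1) (hεk : ε k = -1)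
    (hgj : ∀ i, i ≠ j → y i ≠ y j) (hgk : ∀ i, i ≠ k → y i ≠ y k) :
    ContinuousLinearMap.pi (aDc ε k y) (aV ε j y)
      - ContinuousLinearMap.pi (aDc ε j y) (aV ε k y) = 0 := by
  funext m
  simp only [Pi.sub_apply, ContinuousLinearMap.pi_apply, Pi.zero_apply]
  rw [sub_eq_zero]
  rcases eq_or_ne m j with rfl | hmj
  · exact (aDc_symm ε (Ne.symm hjk) hjk hεk hεj hgk hgj).symm
  · exact aDc_symm ε hjk hmj hεj hεk hgj hgk

end Bracket


end AbstractIsoperiodic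


/-- Phase space of branch points `E₀,…,E_{2g+1}` and quasimomentum-zero projections
`α₀,…,α_g`. -/
abbrev IsoPhase (g : ℕ) := (Fin (2 * g + 2) → ℝ) × (Fin (g + 1) → ℝ)

/-- The open region `Ω`: `E₀ < E₁ < ⋯ < E_{2g+1}` and `E_{2k} < α_k < E_{2k+1}`. -/
def isoOmega (g : ℕ) : Set (IsoPhase g) :=
  {p | StrictMono p.1 ∧ ∀ k : Fin (g + 1),
    p.1 ⟨2 * (k : ℕ), by have := k.isLt; omega⟩ < p.2 k ∧
    p.2 k < p.1 ⟨2 * (k : ℕ) + 1, by have := k.isLt; omega⟩}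

/-- `c_k = sqrt | ∏ⱼ (α_k − E_j) / ∏_{j≠k} (α_k − α_j)² |`. -/
noncomputable def isoC (g : ℕ) (p : IsoPhase g) (k : Fin (g + 1)) : ℝ :=
  Real.sqrt |(∏ j, (p.2 k - p.1 j)) / ∏ j ∈ Finset.univ.erase k, (p.2 k - p.2 j) ^ 2|

/-- The isoperiodic deformation vector field `V_k`:
`dE_j/dτ = c_k/(E_j − α_k)`, `dα_j/dτ = c_k/(α_j − α_k)` for `j ≠ k`, and
`dα_k/dτ = (1/2) Σⱼ c_k/(E_j − α_k) − Σ_{j≠k} c_k/(α_j − α_k)`. -/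
noncomputable def isoV (g : ℕ) (k : Fin (g + 1)) (p : IsoPhase g) : IsoPhase g :=
  (fun j => isoC g p k / (p.1 j - p.2 k),
   fun j => if j = k then
      (1 / 2) * ∑ i, isoC g p k / (p.1 i - p.2 k) -
        ∑ i ∈ Finset.univ.erase k, isoC g p k / (p.2 i - p.2 k)
    else isoC g p k / (p.2 j - p.2 k))

/-- weights: `1/2` on branch points, `-1` on the `α`'s -/
noncomputable def eps (g : ℕ) : (Fin (2 * g + 2) ⊕ Fin (g + 1)) → ℝ :=
  Sum.elim (fun _ => (1 : ℝ) / 2) (fun _ => -1)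

noncomputable def isoLE (g : ℕ) : IsoPhase g ≃ₗ[ℝ] ((Fin (2 * g + 2) ⊕ Fin (g + 1)) → ℝ) where
  toFun p := Sum.elim p.1 p.2
  invFun f := (f ∘ Sum.inl, f ∘ Sum.inr)
  map_add' p q := by funext i; cases i <;> rfl
  map_smul' c p := by funext i; cases i <;> rfl
  left_inv p := rfl
  right_inv f := by funext i; cases i <;> rfl

noncomputable def isoCLE (g : ℕ) :
    IsoPhase g ≃L[ℝ] ((Fin (2 * g + 2) ⊕ Fin (g + 1)) → ℝ) :=
  (isoLE g).toContinuousLinearEquiv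

theorem isoCLE_apply (g : ℕ) (p : IsoPhase g) : isoCLE g p = Sum.elim p.1 p.2 := rfl

theorem isoCLE_symm_apply (g : ℕ) (f : (Fin (2 * g + 2) ⊕ Fin (g + 1)) → ℝ) :
    (isoCLE g).symm f = (f ∘ Sum.inl, f ∘ Sum.inr) := rfl

theorem erase_inr (g : ℕ) (k : Fin (g + 1)) :
    (univ : Finset (Fin (2 * g + 2) ⊕ Fin (g + 1))).erase (Sum.inr k)
      = (univ : Finset (Fin (2 * g + 2))).disjSum (univ.erase k) := by
  ext i; cases i <;> simp

theorem sqrt_abs_prod {β : Type*} (s : Finset β) (f : β → ℝ) :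
    Real.sqrt |∏ i ∈ s, f i| = ∏ i ∈ s, Real.sqrt |f i| := by
  induction s using Finset.cons_induction with
  | empty => simp
  | cons a s ha ih => rw [Finset.prod_cons, Finset.prod_cons, abs_mul,
      Real.sqrt_mul (abs_nonneg _), ih]

theorem isoC_eq (g : ℕ) (p : IsoPhase g) (k : Fin (g + 1)) :
    isoC g p k = aC (eps g) (Sum.inr k) (Sum.elim p.1 p.2) := by
  have hA : ∀ l : Fin (2 * g + 2),
      rho (eps g (Sum.inl l)) (Sum.elim p.1 p.2 (Sum.inl l) - Sum.elim p.1 p.2 (Sum.inr k))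
        = Real.sqrt |p.2 k - p.1 l| := by
    intro l
    show |p.1 l - p.2 k| ^ ((1 : ℝ) / 2) = Real.sqrt |p.2 k - p.1 l|
    rw [abs_sub_comm, Real.sqrt_eq_rpow]
  have hB : ∀ l : Fin (g + 1),
      rho (eps g (Sum.inr l)) (Sum.elim p.1 p.2 (Sum.inr l) - Sum.elim p.1 p.2 (Sum.inr k))
        = |p.2 k - p.2 l|⁻¹ := by
    intro l
    show |p.2 l - p.2 k| ^ (-1 : ℝ) = |p.2 k - p.2 l|⁻¹
    rw [abs_sub_comm, Real.rpow_neg_one]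
  rw [isoC, aC, erase_inr, Finset.prod_disjSum, Finset.prod_congr rfl fun l _ => hA l,
    Finset.prod_congr rfl fun l _ => hB l, abs_div, Real.sqrt_div (abs_nonneg _),
    sqrt_abs_prod, sqrt_abs_prod,
    Finset.prod_congr rfl fun (l : Fin (g+1)) (_ : l ∈ Finset.univ.erase k) =>
      (by rw [abs_pow, Real.sqrt_sq (abs_nonneg _)] :
        Real.sqrt |(p.2 k - p.2 l) ^ 2| = |p.2 k - p.2 l|),
    Finset.prod_inv_distrib, div_eq_mul_inv]

theorem isoV_eq (g : ℕ) (k : Fin (g + 1)) (p : IsoPhase g) :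
    isoV g k p = (isoCLE g).symm (aV (eps g) (Sum.inr k) (Sum.elim p.1 p.2)) := by
  rw [isoCLE_symm_apply]
  refine Prod.ext ?_ ?_
  · funext m
    show isoC g p k / (p.1 m - p.2 k) = aV (eps g) (Sum.inr k) (Sum.elim p.1 p.2) (Sum.inl m)
    rw [aV_apply_ne _ _ _ (by simp : (Sum.inl m : Fin (2*g+2) ⊕ Fin (g+1)) ≠ Sum.inr k),
      isoC_eq]
    rfl
  · funext m
    show (if m = k then _ else _) = aV (eps g) (Sum.inr k) (Sum.elim p.1 p.2) (Sum.inr m)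
    by_cases hmk : m = k
    · subst hmk
      rw [if_pos rfl, aV_apply_self, erase_inr, Finset.sum_disjSum, ← isoC_eq, mul_add,
        sub_eq_add_neg]
      congr 1
      · rw [Finset.mul_sum, Finset.mul_sum]
        refine Finset.sum_congr rfl fun l _ => ?_
        show (1:ℝ)/2 * (isoC g p m / (p.1 l - p.2 m))
          = isoC g p m * ((1:ℝ)/2 / (p.1 l - p.2 m))
        ring
      · rw [Finset.mul_sum, ← Finset.sum_neg_distrib]
        refine Finset.sum_congr rfl fun l _ => ?_
        show -(isoC g p m / (p.2 l - p.2 m)) = isoC g p m * (-1 / (p.2 l - p.2 m))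
        ring
    · rw [if_neg hmk, aV_apply_ne _ _ _ (by simp [hmk] : (Sum.inr m : Fin (2*g+2) ⊕ Fin (g+1)) ≠ Sum.inr k), isoC_eq]
      rfl

theorem omega_good (g : ℕ) {p : IsoPhase g} (hp : p ∈ isoOmega g) (k : Fin (g + 1)) :
    ∀ i, i ≠ Sum.inr k → Sum.elim p.1 p.2 i ≠ Sum.elim p.1 p.2 (Sum.inr k) := by
  obtain ⟨hmono, hint⟩ := hp
  intro i hi
  cases i with
  | inl m =>
    simp only [Sum.elim_inl, Sum.elim_inr]
    obtain ⟨h1, h2⟩ := hint k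
    rcases le_or_gt (m : ℕ) (2 * (k : ℕ)) with h | h
    · refine ne_of_lt (lt_of_le_of_lt (hmono.monotone ?_) h1)
      exact Fin.le_def.mpr (by simpa using h)
    · refine ne_of_gt (h2.trans_le (hmono.monotone ?_))
      exact Fin.le_def.mpr (by simpa using h)
  | inr m =>
    have hmk : m ≠ k := fun h => hi (by rw [h])
    simp only [Sum.elim_inr]
    obtain ⟨h1k, h2k⟩ := hint k
    obtain ⟨h1m, h2m⟩ := hint m
    rcases lt_or_gt_of_ne (fun h : (m : ℕ) = (k : ℕ) => hmk (Fin.ext h)) with h | h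
    · refine ne_of_lt (h2m.trans_le (le_trans (hmono.monotone ?_) h1k.le))
      exact Fin.le_def.mpr (by simp; omega)
    · refine ne_of_gt (h2k.trans_le (le_trans (hmono.monotone ?_) h1m.le))
      exact Fin.le_def.mpr (by simp; omega)

/-- The isoperiodic deformation vector fields are smooth on `Ω` and commute pairwise:
their Lie brackets, computed with the Fréchet derivative, vanish on `Ω`. -/
theorem isoperiodic_flows_commute (g : ℕ) :
    (∀ k : Fin (g + 1), ContDiffOn ℝ (⊤ : ℕ∞) (isoV g k) (isoOmega g)) ∧
    (∀ j k : Fin (g + 1), ∀ p ∈ isoOmega g,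
      fderiv ℝ (isoV g k) p (isoV g j p) - fderiv ℝ (isoV g j) p (isoV g k p) = 0) := by
  have hVfun : ∀ (kk : Fin (g + 1)),
      isoV g kk = (⇑(isoCLE g).symm) ∘ (aV (eps g) (Sum.inr kk)) ∘ ⇑(isoCLE g) := by
    intro kk; funext q
    rw [Function.comp_apply, Function.comp_apply, isoCLE_apply]
    exact isoV_eq g kk q
  constructor
  · intro k p hp
    have hgood := omega_good g hp k
    have h1 : ContDiffAt ℝ (⊤ : ℕ∞) (aV (eps g) (Sum.inr k)) (Sum.elim p.1 p.2) :=
      aV_contDiffAt _ _ hgood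
    have h2 : ContDiffAt ℝ (⊤ : ℕ∞) (isoV g k) p := by
      rw [hVfun k]
      exact (isoCLE g).symm.contDiff.contDiffAt.comp _
        (h1.comp p (isoCLE g).contDiff.contDiffAt)
    exact h2.contDiffWithinAt
  · intro j k p hp
    rcases eq_or_ne j k with rfl | hjk
    · simp
    have hgj := omega_good g hp j
    have hgk := omega_good g hp k
    have hinj : (Sum.inr j : Fin (2 * g + 2) ⊕ Fin (g + 1)) ≠ Sum.inr k :=
      fun h => hjk (Sum.inr.inj h)
    have hD : ∀ (kk : Fin (g + 1)),
        (∀ i, i ≠ Sum.inr kk → Sum.elim p.1 p.2 i ≠ Sum.elim p.1 p.2 (Sum.inr kk)) →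
        HasFDerivAt (isoV g kk)
          (((isoCLE g).symm : _ →L[ℝ] _).comp
            ((ContinuousLinearMap.pi (aDc (eps g) (Sum.inr kk) (Sum.elim p.1 p.2))).comp
              ((isoCLE g) : _ →L[ℝ] _))) p := by
      intro kk hg
      rw [hVfun kk]
      have h2 : HasFDerivAt (aV (eps g) (Sum.inr kk))
          (ContinuousLinearMap.pi (aDc (eps g) (Sum.inr kk) (Sum.elim p.1 p.2)))
          ((isoCLE g) p) := aV_hasFDerivAt _ _ hg
      exact (isoCLE g).symm.hasFDerivAt.comp p (h2.comp p (isoCLE g).hasFDerivAt)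
    have hj := (hD j hgj).fderiv
    have hk := (hD k hgk).fderiv
    rw [hj, hk]
    have happ : ∀ (kk jj : Fin (g + 1)),
        (((isoCLE g).symm : _ →L[ℝ] _).comp
          ((ContinuousLinearMap.pi (aDc (eps g) (Sum.inr kk) (Sum.elim p.1 p.2))).comp
            ((isoCLE g) : _ →L[ℝ] _))) (isoV g jj p)
        = (isoCLE g).symm (ContinuousLinearMap.pi (aDc (eps g) (Sum.inr kk) (Sum.elim p.1 p.2))
            (aV (eps g) (Sum.inr jj) (Sum.elim p.1 p.2))) := by
      intro kk jj
      simp only [ContinuousLinearMap.comp_apply, ContinuousLinearEquiv.coe_coe]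
      congr 1
      congr 1
      rw [isoV_eq g jj p]
      exact (isoCLE g).apply_symm_apply _
    rw [happ, happ, ← map_sub,
      abstract_bracket (eps g) hinj rfl rfl hgj hgk]
    exact map_zero _
end
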